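/- For every graph G of order n, the energy (trace norm) satisfies E(G) ≤ n(1 + √n)/2. -/

import Mathlib

open Finset

/-- Singular values (unsorted) of a complex matrix: square roots of eigenvalues of `A * Aᴴ`. -/
noncomputable def svalC {m n : ℕ} (A : Matrix (Fin m) (Fin n) ℂ) : Fin m → ℝ :=
  fun i => Real.sqrt ((Matrix.isHermitian_mul_conjTranspose_self A).eigenvalues i)

/-- Singular values of a complex matrix sorted in decreasing order. -/
noncomputable def svalCSorted {m n : ℕ} (A : Matrix (Fin m) (Fin n) ℂ) : Fin m → ℝ :=
  svalC A ∘ ⇑(Tuple.sort (fun i => -(svalC A i)))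

/-- Singular values (unsorted) of a real matrix. -/
noncomputable def svalR {m n : ℕ} (A : Matrix (Fin m) (Fin n) ℝ) : Fin m → ℝ :=
  fun i => Real.sqrt ((Matrix.isHermitian_mul_conjTranspose_self A).eigenvalues i)

/-- Singular values of a real matrix sorted in decreasing order. -/
noncomputable def svalRSorted {m n : ℕ} (A : Matrix (Fin m) (Fin n) ℝ) : Fin m → ℝ :=
  svalR A ∘ ⇑(Tuple.sort (fun i => -(svalR A i)))

/-- Ky Fan `k`-norm of a complex matrix: the sum of its `k` largest singular values. -/
noncomputable def kyFanC {m n : ℕ} (A : Matrix (Fin m) (Fin n) ℂ) (k : ℕ) : ℝ :=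
  ∑ i : Fin m, if (i : ℕ) < k then svalCSorted A i else 0

/-- Ky Fan `k`-norm of a real matrix. -/
noncomputable def kyFanR {m n : ℕ} (A : Matrix (Fin m) (Fin n) ℝ) (k : ℕ) : ℝ :=
  ∑ i : Fin m, if (i : ℕ) < k then svalRSorted A i else 0

/-- The adjacency matrix of a simple graph is Hermitian (over `ℝ`). -/
lemma adjHerm {n : ℕ} (G : SimpleGraph (Fin n)) [DecidableRel G.Adj] :
    (G.adjMatrix ℝ).IsHermitian := by
  have h := G.isSymm_adjMatrix (α := ℝ)
  exact (Matrix.conjTranspose_eq_transpose_of_trivial _).trans h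

/-- Singular values of a graph (unsorted). -/
noncomputable def gsval {n : ℕ} (G : SimpleGraph (Fin n)) [DecidableRel G.Adj] : Fin n → ℝ :=
  svalR (G.adjMatrix ℝ)

/-- Singular values of a graph sorted in decreasing order. -/
noncomputable def gsvalSorted {n : ℕ} (G : SimpleGraph (Fin n)) [DecidableRel G.Adj] : Fin n → ℝ :=
  svalRSorted (G.adjMatrix ℝ)

/-- Eigenvalues of a graph sorted in decreasing order: `geigSorted G 0 = μ₁ ≥ ⋯ ≥ μₙ`. -/
noncomputable def geigSorted {n : ℕ} (G : SimpleGraph (Fin n)) [DecidableRel G.Adj] : Fin n → ℝ :=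
  (adjHerm G).eigenvalues ∘ ⇑(Tuple.sort (fun i => -((adjHerm G).eigenvalues i)))

/-- Ky Fan `k`-norm of a graph. -/
noncomputable def kyFanG {n : ℕ} (G : SimpleGraph (Fin n)) [DecidableRel G.Adj] (k : ℕ) : ℝ :=
  kyFanR (G.adjMatrix ℝ) k

section KMhelpers

open Matrix

lemma sum_eig_eq_trace {n : ℕ} {B : Matrix (Fin n) (Fin n) ℝ} (hB : B.IsHermitian) :
    ∑ i, hB.eigenvalues i = B.trace := by
  conv_rhs => rw [hB.spectral_theorem, Unitary.conjStarAlgAut_apply]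
  rw [Matrix.trace_mul_cycle,
    (Matrix.mem_unitaryGroup_iff').mp (hB.eigenvectorUnitary).2, Matrix.one_mul,
    Matrix.trace_diagonal]
  simp

lemma rayleigh_le {n : ℕ} {B : Matrix (Fin n) (Fin n) ℝ} (hB : B.IsHermitian) {M : ℝ}
    (hM : ∀ i, hB.eigenvalues i ≤ M) (x : Fin n → ℝ) :
    x ⬝ᵥ (B *ᵥ x) ≤ M * (x ⬝ᵥ x) := by
  set U : Matrix (Fin n) (Fin n) ℝ := (hB.eigenvectorUnitary : Matrix (Fin n) (Fin n) ℝ) with hU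
  set y : Fin n → ℝ := (star U) *ᵥ x with hy
  have hUU : U * star U = 1 := (Matrix.mem_unitaryGroup_iff).mp (hB.eigenvectorUnitary).2
  have hxy : ∀ w : Fin n → ℝ, x ⬝ᵥ (U *ᵥ w) = y ⬝ᵥ w := by
    intro w
    rw [Matrix.dotProduct_mulVec, hy]
    congr 1
    rw [Matrix.star_eq_conjTranspose, Matrix.conjTranspose_eq_transpose_of_trivial,
      Matrix.mulVec_transpose]
  have h1 : x ⬝ᵥ (B *ᵥ x) = ∑ i, hB.eigenvalues i * (y i)^2 := by
    conv_lhs => rw [hB.spectral_theorem, Unitary.conjStarAlgAut_apply]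
    rw [← Matrix.mulVec_mulVec, ← Matrix.mulVec_mulVec, hxy, ← hy]
    simp [dotProduct, Matrix.mulVec_diagonal, sq]
    exact Finset.sum_congr rfl fun i _ => by ring
  have h2 : x ⬝ᵥ x = ∑ i, (y i)^2 := by
    have : x ⬝ᵥ x = x ⬝ᵥ ((U * star U) *ᵥ x) := by rw [hUU, Matrix.one_mulVec]
    rw [this, ← Matrix.mulVec_mulVec, hxy, ← hy]
    simp [dotProduct, sq]
  rw [h1, h2, Finset.mul_sum]
  exact Finset.sum_le_sum fun i _ => mul_le_mul_of_nonneg_right (hM i) (sq_nonneg _)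

lemma km_scalar {nn T q : ℝ} (hn : 1 ≤ nn) (hT0 : 0 ≤ T) (hTn : T ≤ nn * (nn - 1))
    (hq0 : 0 ≤ q) (hq1 : T ≤ nn * q) (hq2 : q ^ 2 ≤ T) :
    q + Real.sqrt ((nn - 1) * (T - q ^ 2)) ≤ nn * (1 + Real.sqrt nn) / 2 := by
  set u := Real.sqrt nn with hu
  have hu1 : 1 ≤ u := by
    rw [hu, show (1:ℝ) = Real.sqrt 1 by simp]
    exact Real.sqrt_le_sqrt hn
  have hu2 : u ^ 2 = nn := Real.sq_sqrt (by linarith)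
  have hqn : q ≤ nn := by nlinarith
  have hqK : q ≤ nn * (1 + u) / 2 := by nlinarith
  have hr : Real.sqrt ((nn - 1) * (T - q ^ 2)) ≤ nn * (1 + u) / 2 - q := by
    rw [show nn * (1 + u) / 2 - q = Real.sqrt ((nn * (1 + u) / 2 - q) ^ 2) from
      (Real.sqrt_sq (by linarith)).symm]
    apply Real.sqrt_le_sqrt
    rw [← hu2]
    rcases le_or_gt (u ^ 2 * T) ((u ^ 2 * (1 + u) / 2) ^ 2) with h | h
    · nlinarith [sq_nonneg (u ^ 2 * q - u ^ 2 * (1 + u) / 2), hu1, sq_nonneg u]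
    · have hTK : u ^ 2 * (1 + u) / 2 ≤ T := by nlinarith
      have hp : (0:ℝ) ≤ (u ^ 2 * q - T) * (u ^ 2 * q + T - 2 * (u ^ 2 * (1 + u) / 2)) := by
        apply mul_nonneg <;> nlinarith
      nlinarith [sq_nonneg (2 * T - u ^ 3 - u ^ 4), hp, hu1, sq_nonneg u]
  linarith

end KMhelpers

open Matrix in
/-- Koolen–Moulton absolute bound: `E(G) ≤ n(1 + √n)/2`. -/
theorem energy_le_koolen_moulton {n : ℕ} (G : SimpleGraph (Fin n)) [DecidableRel G.Adj] :
    ∑ i, gsval G i ≤ (n : ℝ) * (1 + Real.sqrt n) / 2 := by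
  simp only [gsval, svalR]
  rcases Nat.eq_zero_or_pos n with hn | hn
  · subst hn; simp
  have : NeZero n := ⟨hn.ne'⟩
  set A : Matrix (Fin n) (Fin n) ℝ := G.adjMatrix ℝ with hA
  set hH : (A * Aᴴ).IsHermitian := Matrix.isHermitian_mul_conjTranspose_self A with hHdef
  set e : Fin n → ℝ := hH.eigenvalues with he
  set T : ℝ := (A * Aᴴ).trace with hT
  have hsymm : ∀ i j, A j i = A i j := fun i j => (G.isSymm_adjMatrix).apply i j
  have hepos : ∀ i, 0 ≤ e i := fun i =>
    (Matrix.posSemidef_self_mul_conjTranspose A).eigenvalues_nonneg i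
  have hsum : ∑ i, e i = T := sum_eig_eq_trace hH
  have hAsq : ∀ i j, A i j * A i j = A i j := by
    intro i j; by_cases h : G.Adj i j <;> simp [hA, h]
  have hconjapp : ∀ i j, Aᴴ i j = A j i := by
    intro i j; simp [Matrix.conjTranspose_apply]
  have hTrow : T = ∑ i, ∑ j, A i j := by
    rw [hT, Matrix.trace]
    refine Finset.sum_congr rfl fun i _ => ?_
    rw [Matrix.diag_apply, Matrix.mul_apply]
    refine Finset.sum_congr rfl fun j _ => ?_
    rw [hconjapp, hsymm, hAsq]
  have hrowdeg : ∀ i, ∑ j, A i j = (G.degree i : ℝ) := by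
    intro i
    simp [hA, SimpleGraph.adjMatrix_apply, Finset.sum_boole, SimpleGraph.degree,
      SimpleGraph.neighborFinset_eq_filter]
  have hT0 : 0 ≤ T := by
    rw [hTrow]
    exact Finset.sum_nonneg fun i _ => by rw [hrowdeg]; positivity
  have hTn : T ≤ (n : ℝ) * ((n : ℝ) - 1) := by
    rw [hTrow]
    have hrow : ∀ i : Fin n, ∑ j, A i j ≤ (n : ℝ) - 1 := by
      intro i
      rw [hrowdeg]
      have h1 : G.degree i < n := by simpa using G.degree_lt_card_verts i
      have : (G.degree i : ℝ) + 1 ≤ n := by exact_mod_cast h1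
      linarith
    calc ∑ i, ∑ j, A i j ≤ ∑ _i : Fin n, ((n:ℝ) - 1) := Finset.sum_le_sum fun i _ => hrow i
      _ = (n:ℝ) * ((n:ℝ) - 1) := by rw [Finset.sum_const]; simp [mul_comm]
  -- max eigenvalue
  obtain ⟨i₀, hi₀⟩ := Finite.exists_max e
  -- Rayleigh with all-ones vector
  have hray : (fun _ => (1:ℝ)) ⬝ᵥ ((A * Aᴴ) *ᵥ (fun _ => (1:ℝ))) ≤ e i₀ * n := by
    have := rayleigh_le hH (fun i => hi₀ i) (fun _ => (1:ℝ))
    simpa [dotProduct] using this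
  have hquad : (fun _ => (1:ℝ)) ⬝ᵥ ((A * Aᴴ) *ᵥ (fun _ => (1:ℝ)))
      = ∑ j, (∑ i, A i j) ^ 2 := by
    have hBe : ∀ i k, (A * Aᴴ) i k = ∑ j, A i j * A k j := by
      intro i k
      rw [Matrix.mul_apply]
      exact Finset.sum_congr rfl fun j _ => by rw [hconjapp]
    calc (fun _ => (1:ℝ)) ⬝ᵥ ((A * Aᴴ) *ᵥ (fun _ => (1:ℝ)))
        = ∑ i, ∑ k, ∑ j, A i j * A k j := by
          simp only [dotProduct, Matrix.mulVec, one_mul, mul_one]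
          exact Finset.sum_congr rfl fun i _ => Finset.sum_congr rfl fun k _ => hBe i k
      _ = ∑ i, ∑ j, ∑ k, A i j * A k j := by
          exact Finset.sum_congr rfl fun i _ => Finset.sum_comm
      _ = ∑ j, ∑ i, ∑ k, A i j * A k j := Finset.sum_comm
      _ = ∑ j, (∑ i, A i j) ^ 2 := by
          refine Finset.sum_congr rfl fun j _ => ?_
          rw [sq, Finset.sum_mul_sum]
  have hTcol : T = ∑ j, ∑ i, A i j := by rw [hTrow]; exact Finset.sum_comm
  have hmax : T ^ 2 ≤ (n : ℝ) ^ 2 * e i₀ := by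
    have h1 : (∑ j, ∑ i, A i j) ^ 2 ≤ (n : ℝ) * ∑ j, (∑ i, A i j) ^ 2 := by
      have := sq_sum_le_card_mul_sum_sq (s := (Finset.univ : Finset (Fin n)))
        (f := fun j => ∑ i, A i j)
      simpa using this
    have h2 : ∑ j, (∑ i, A i j) ^ 2 ≤ e i₀ * n := by rw [← hquad]; exact hray
    rw [hTcol]
    nlinarith [h1, h2, (by positivity : (0:ℝ) ≤ (n:ℝ))]
  set q : ℝ := Real.sqrt (e i₀) with hq
  have hq0 : 0 ≤ q := Real.sqrt_nonneg _
  have hqsq : q ^ 2 = e i₀ := Real.sq_sqrt (hepos i₀)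
  have hnpos : (0:ℝ) < n := by exact_mod_cast hn
  have hq1 : T ≤ (n : ℝ) * q := by
    have h1 : (T / n) ^ 2 ≤ e i₀ := by
      rw [div_pow, div_le_iff₀ (by positivity)]
      nlinarith [hmax]
    have h2 : T / n ≤ q := (Real.le_sqrt (by positivity) (hepos i₀)).mpr h1
    rw [div_le_iff₀ hnpos] at h2
    linarith [h2]
  have hq2 : q ^ 2 ≤ T := by
    rw [hqsq, ← hsum]
    exact Finset.single_le_sum (fun i _ => hepos i) (Finset.mem_univ i₀)
  -- split the sum
  have hsplit : ∑ i, Real.sqrt (e i)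
      = q + ∑ i ∈ Finset.univ.erase i₀, Real.sqrt (e i) := by
    exact (Finset.add_sum_erase Finset.univ (fun i => Real.sqrt (e i))
      (Finset.mem_univ i₀)).symm
  have hcard : ((Finset.univ.erase i₀).card : ℝ) = (n : ℝ) - 1 := by
    rw [Finset.card_erase_of_mem (Finset.mem_univ i₀)]
    simp [Nat.cast_sub hn]
  have hRnn : 0 ≤ ∑ i ∈ Finset.univ.erase i₀, Real.sqrt (e i) :=
    Finset.sum_nonneg fun i _ => Real.sqrt_nonneg _
  have hRsq : (∑ i ∈ Finset.univ.erase i₀, Real.sqrt (e i)) ^ 2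
      ≤ ((n : ℝ) - 1) * (T - q ^ 2) := by
    have h1 := sq_sum_le_card_mul_sum_sq (s := Finset.univ.erase i₀)
      (f := fun i => Real.sqrt (e i))
    have h2 : ∑ i ∈ Finset.univ.erase i₀, Real.sqrt (e i) ^ 2
        = T - q ^ 2 := by
      rw [hqsq]
      rw [show ∀ s : Finset (Fin n), ∑ i ∈ s, Real.sqrt (e i) ^ 2 = ∑ i ∈ s, e i from
        fun s => Finset.sum_congr rfl fun i _ => Real.sq_sqrt (hepos i)]
      rw [Finset.sum_erase_eq_sub (Finset.mem_univ i₀), hsum]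
    calc (∑ i ∈ Finset.univ.erase i₀, Real.sqrt (e i)) ^ 2
        ≤ ((Finset.univ.erase i₀).card : ℝ)
            * ∑ i ∈ Finset.univ.erase i₀, Real.sqrt (e i) ^ 2 := by exact_mod_cast h1
      _ = ((n : ℝ) - 1) * (T - q ^ 2) := by rw [hcard, h2]
  have hR : ∑ i ∈ Finset.univ.erase i₀, Real.sqrt (e i)
      ≤ Real.sqrt (((n : ℝ) - 1) * (T - q ^ 2)) := by
    rw [show ∑ i ∈ Finset.univ.erase i₀, Real.sqrt (e i)
      = Real.sqrt ((∑ i ∈ Finset.univ.erase i₀, Real.sqrt (e i)) ^ 2) from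
      (Real.sqrt_sq hRnn).symm]
    exact Real.sqrt_le_sqrt hRsq
  have hfinal := km_scalar (nn := (n:ℝ)) (T := T) (q := q)
    (by exact_mod_cast hn) hT0 hTn hq0 hq1 hq2
  calc ∑ i, Real.sqrt (e i) = q + ∑ i ∈ Finset.univ.erase i₀, Real.sqrt (e i) := hsplit
    _ ≤ q + Real.sqrt (((n : ℝ) - 1) * (T - q ^ 2)) := by linarith [hR]
    _ ≤ (n : ℝ) * (1 + Real.sqrt n) / 2 := hfinal
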